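/- On the domain [0,1]² ⊆ ℝ², the path method A^γ defined componentwise by the monotone path function γ_i(x̄, x', t) = x'_i + (x̄_i − x'_i)·t^{(x̄_i − x'_i)²} satisfies the symmetry-preserving axiom (it equals Integrated Gradients whenever x̄_1 = x̄_2 and x'_1 = x'_2, since then γ is the straight-line path), yet A^γ is not the Integrated Gradients method: there exist an input x̄, baseline x', and continuously differentiable F with A^γ(x̄, x', F) ≠ IG(x̄, x', F). Hence symmetry-preserving alone does not characterize IG among monotone path methods. -/

import Mathlib

open MeasureTheory

/-- The partial derivative of `F : ℝ² → ℝ` in the `i`-th coordinate at `x`. -/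
noncomputable def pderiv' {n : ℕ} (F : (Fin n → ℝ) → ℝ) (i : Fin n) (x : Fin n → ℝ) : ℝ :=
  deriv (fun t => F (Function.update x i t)) (x i)

/-- The Integrated Gradients attribution. -/
noncomputable def IG {n : ℕ} (xbar x' : Fin n → ℝ) (F : (Fin n → ℝ) → ℝ) : Fin n → ℝ :=
  fun i => (xbar i - x' i) * ∫ t in (0:ℝ)..1, pderiv' F i (x' + t • (xbar - x'))

/-- The path method for a path `γ`: `A^γ_i(F) = ∫₀¹ (∂F/∂x_i)(γ(t))·γ_i'(t) dt`. -/
noncomputable def pathMethod {n : ℕ} (γ : ℝ → (Fin n → ℝ)) (F : (Fin n → ℝ) → ℝ) :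
    Fin n → ℝ :=
  fun i => ∫ t in (0:ℝ)..1, pderiv' F i (γ t) * deriv (fun s => γ s i) t

/-- The counterexample monotone path function on `[0,1]²`:
`γ_i(x̄, x', t) = x'_i + (x̄_i − x'_i)·t^{(x̄_i − x'_i)²}` (real exponent). -/
noncomputable def gammaEx (xbar x' : Fin 2 → ℝ) (t : ℝ) : Fin 2 → ℝ :=
  fun i => x' i + (xbar i - x' i) * t ^ (((xbar i - x' i) ^ 2 : ℝ))

/-- For a point with equal coordinates and a symmetric `F`, the two partials agree. -/
lemma pderiv'_symm_aux (F : (Fin 2 → ℝ) → ℝ) (hsym : ∀ x : Fin 2 → ℝ, F ![x 1, x 0] = F x)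
    (y : Fin 2 → ℝ) (hy : y 0 = y 1) : pderiv' F 0 y = pderiv' F 1 y := by
  unfold pderiv'
  have h0 : (fun t => F (Function.update y 0 t)) = fun t => F ![y 1, t] := by
    funext t
    have := hsym (Function.update y 0 t)
    rw [← this]
    congr 1
  have h1 : (fun t => F (Function.update y 1 t)) = fun t => F ![y 1, t] := by
    funext t
    congr 1
    funext j
    fin_cases j <;> simp [Function.update_apply, hy]
  rw [h0, h1, hy]

/-- The multiplication counterexample function. -/
noncomputable def Fmul : (Fin 2 → ℝ) → ℝ := fun x => x 0 * x 1

lemma Fmul_contDiff : ContDiff ℝ 1 Fmul := by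
  have h0 : ContDiff ℝ 1 (fun x : Fin 2 → ℝ => x 0) :=
    (ContinuousLinearMap.proj (R := ℝ) (φ := fun _ : Fin 2 => ℝ) 0).contDiff
  have h1 : ContDiff ℝ 1 (fun x : Fin 2 → ℝ => x 1) :=
    (ContinuousLinearMap.proj (R := ℝ) (φ := fun _ : Fin 2 => ℝ) 1).contDiff
  exact h0.mul h1

lemma pderiv'_Fmul_zero (x : Fin 2 → ℝ) : pderiv' Fmul 0 x = x 1 := by
  unfold pderiv'
  have h : (fun t => Fmul (Function.update x 0 t)) = fun t => t * x 1 := by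
    funext t; simp [Fmul, Function.update_apply]
  rw [h, deriv_mul_const differentiableAt_fun_id]; simp

theorem symmetry_preserving_insufficient :
    (∀ F : (Fin 2 → ℝ) → ℝ, ContDiff ℝ 1 F →
      ∀ xbar ∈ Set.Icc (0 : Fin 2 → ℝ) 1, ∀ x' ∈ Set.Icc (0 : Fin 2 → ℝ) 1,
        (∀ x : Fin 2 → ℝ, F ![x 1, x 0] = F x) →
        xbar 0 = xbar 1 → x' 0 = x' 1 →
        pathMethod (gammaEx xbar x') F 0 = pathMethod (gammaEx xbar x') F 1) ∧
    (∃ xbar ∈ Set.Icc (0 : Fin 2 → ℝ) 1, ∃ x' ∈ Set.Icc (0 : Fin 2 → ℝ) 1,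
      ∃ F : (Fin 2 → ℝ) → ℝ, ContDiff ℝ 1 F ∧
        pathMethod (gammaEx xbar x') F ≠ IG xbar x' F) := by
  constructor
  · intro F _hF xbar _hxbar x' _hx' hsym hb hx
    have hcomp : (fun s : ℝ => gammaEx xbar x' s 0) = fun s : ℝ => gammaEx xbar x' s 1 := by
      funext s; simp only [gammaEx, hb, hx]
    unfold pathMethod
    congr 1
    funext t
    have hy : gammaEx xbar x' t 0 = gammaEx xbar x' t 1 := congrFun hcomp t
    rw [pderiv'_symm_aux F hsym _ hy, hcomp]
  · refine ⟨![1, 1/2], ?_, 0, ?_, Fmul, Fmul_contDiff, ?_⟩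
    · constructor <;> intro i <;> fin_cases i <;> norm_num
    · constructor <;> intro i <;> fin_cases i <;> norm_num
    · intro h
      have h0 := congrFun h 0
      have hpath : pathMethod (gammaEx ![1, 1/2] 0) Fmul 0 = 2/5 := by
        unfold pathMethod
        have hg0 : (fun s : ℝ => gammaEx ![1, 1/2] 0 s 0) = id := by
          funext s; norm_num [gammaEx]
        have heq : (fun t : ℝ => pderiv' Fmul 0 (gammaEx ![1, 1/2] 0 t) *
            deriv (fun s => gammaEx ![1, 1/2] 0 s 0) t)
            = fun t : ℝ => (1/2 : ℝ) * t ^ ((1/4:ℝ)) := by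
          funext t
          rw [hg0, deriv_id, pderiv'_Fmul_zero, mul_one]
          norm_num [gammaEx]
        rw [heq, intervalIntegral.integral_const_mul, integral_rpow (Or.inl (by norm_num))]
        norm_num [Real.one_rpow, Real.zero_rpow]
      have hig : IG ![1, 1/2] 0 Fmul 0 = 1/4 := by
        unfold IG
        have heq : (fun t : ℝ => pderiv' Fmul 0 ((0 : Fin 2 → ℝ) + t • (![1, 1/2] - 0)))
            = fun t : ℝ => t * (1/2 : ℝ) := by
          funext t
          rw [pderiv'_Fmul_zero]
          norm_num
        rw [heq, intervalIntegral.integral_mul_const, integral_id]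
        norm_num
      rw [hpath, hig] at h0
      norm_num at h0
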